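/- Let L|K be a nontrivial Kummer extension of degree p as described. Then for every h ∈ 𝔄 one has 𝔷^p/(h−1) ∈ A, i.e., v(h − 1) ≤ v(𝔷^p) = p·v(ζ − 1); equivalently, the ideal H generated by the elements 𝔷^p/(h−1) for h ∈ 𝔄 is an integral ideal of A. -/

import Mathlib

/-!
Mathlib's multiplicative valuation convention is used: `v x ≤ 1` means `x` is
integral (additive valuation `≥ 0`).  The paper's additive inequality
`v(h − 1) ≤ v(𝔷^p)` becomes `v (𝔷^p) ≤ v (h − 1)` multiplicatively, which says
exactly that `𝔷^p/(h−1)` lies in `A`.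
-/

/-- The set `𝔄` of elements `h ∈ K` such that the solutions of `X^p = h`
generate `L` over `K`. -/
def kummerSet (p : ℕ) (K L : Type*) [Field K] [Field L] [Algebra K L] : Set K :=
  {h : K | ∃ β : L, β ^ p = algebraMap K L h ∧ IntermediateField.adjoin K {β} = ⊤}

/-- Lemma 3.4 of the paper: for every `h ∈ 𝔄` the element
`𝔷^p/(h−1)` lies in `A`, i.e. `H` is an integral ideal of `A`. -/
theorem statement5
    (p : ℕ) (hp : p.Prime)
    (K : Type*) [Field K] [CharZero K]
    (Γ : Type*) [LinearOrderedCommGroupWithZero Γ]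
    (v : Valuation K Γ) [HenselianLocalRing v.valuationSubring]
    (hres : CharP (IsLocalRing.ResidueField v.valuationSubring) p)
    (ζ : K) (hζ : IsPrimitiveRoot ζ p)
    (L : Type*) [Field L] [Algebra K L] [FiniteDimensional K L]
    (hdeg : Module.finrank K L = p)
    (α : L) (h₀ : K) (hh₀ : h₀ ≠ 0) (hα : α ^ p = algebraMap K L h₀)
    (hgen : IntermediateField.adjoin K {α} = ⊤)
    (w : Valuation L Γ) (hw : ∀ x : K, w (algebraMap K L x) = v x) :
    ∀ h ∈ kummerSet p K L, v ((ζ - 1) ^ p) ≤ v (h - 1) := by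
  intro h hh
  by_contra hcon
  rw [not_le] at hcon
  obtain ⟨β', hβ'p, hβ'gen⟩ := hh
  haveI : NeZero p := ⟨hp.ne_zero⟩
  haveI : Fact p.Prime := ⟨hp⟩
  have hp1 : 1 < p := hp.one_lt
  have hp0 : 0 < p := hp.pos
  set A := v.valuationSubring with hAdef
  have hA : v.Integers A :=
    { hom_inj := Subtype.coe_injective
      map_le_one := fun r => r.2
      exists_of_le_one := fun r hr => ⟨⟨r, hr⟩, rfl⟩ }
  set z : K := ζ - 1 with hzdef
  have hz0 : z ≠ 0 := sub_ne_zero.mpr (hζ.ne_one hp1)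
  have hvz0 : v z ≠ 0 := v.ne_zero_iff.mpr hz0
  have hvzpos : (0 : Γ) < v z := zero_lt_iff.mpr hvz0
  -- v ζ = 1
  have hvζ : v ζ = 1 := by
    have h1 : (v ζ) ^ p = 1 := by rw [← map_pow, hζ.pow_eq_one, map_one]
    exact (pow_eq_one_iff_left hp.ne_zero).mp h1
  have hvz1 : v z ≤ 1 := le_trans (v.map_sub ζ 1) (by simp [hvζ])
  have hζA : ζ ∈ A := by simp [hAdef, Valuation.mem_valuationSubring_iff, hvζ]
  -- v z < 1, via the residue field of characteristic p
  have hvzlt : v z < 1 := by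
    rcases lt_or_eq_of_le hvz1 with h' | h'
    · exact h'
    exfalso
    set ζA : A := ⟨ζ, hζA⟩ with hζAdef
    have hζp : ζA ^ p = 1 := by
      apply Subtype.ext
      push_cast
      exact hζ.pow_eq_one
    have hres1 : (IsLocalRing.residue A ζA) ^ p = 1 := by
      rw [← map_pow, hζp, map_one]
    have hfrob : (IsLocalRing.residue A ζA - 1) ^ p = 0 := by
      rw [sub_pow_char, hres1, one_pow, sub_self]
    have hz0' : IsLocalRing.residue A ζA - 1 = 0 :=
      pow_eq_zero_iff hp.ne_zero |>.mp hfrob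
    have hmem : (ζA - 1 : A) ∈ IsLocalRing.maximalIdeal A := by
      rw [← IsLocalRing.residue_eq_zero_iff, map_sub, map_one]
      exact hz0'
    have hnotunit : ¬ IsUnit (ζA - 1 : A) := by
      rw [IsLocalRing.mem_maximalIdeal, mem_nonunits_iff] at hmem
      exact hmem
    rw [hA.isUnit_iff_valuation_eq_one] at hnotunit
    apply hnotunit
    have he : algebraMap A K (ζA - 1) = z := by
      rw [map_sub, map_one]; rfl
    rw [he, ← h']
  -- every natural number has valuation ≤ 1
  have hvnat : ∀ n : ℕ, v (n : K) ≤ 1 := by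
    intro n
    induction n with
    | zero => simp
    | succ n ih =>
      push_cast
      exact le_trans (v.map_add _ _) (by simp [ih])
  have hvpne0 : v ((p : K)) ≠ 0 :=
    v.ne_zero_iff.mpr (Nat.cast_ne_zero.mpr hp.ne_zero)
  have hchoose : ∀ k, k ≠ 0 → k < p → v ((p.choose k : K)) ≤ v ((p : K)) := by
    intro k hk hkp
    obtain ⟨m, hm⟩ := hp.dvd_choose_self hk hkp
    rw [hm]
    push_cast
    rw [map_mul]
    calc v ((p : K)) * v ((m : K)) ≤ v ((p : K)) * 1 :=
          mul_le_mul_right (hvnat m) _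
      _ = v ((p : K)) := mul_one _
  -- binomial expansion
  have hexp : ∀ u : K, (1 + z * u) ^ p
      = 1 + ∑ k ∈ Finset.Ico 1 p, (p.choose k : K) * z ^ k * u ^ k + (z * u) ^ p := by
    intro u
    rw [add_comm, add_pow]
    have e1 : ∀ k ∈ Finset.range (p + 1),
        (z * u) ^ k * 1 ^ (p - k) * (p.choose k : K) = (z * u) ^ k * (p.choose k : K) := by
      intro k _; rw [one_pow, mul_one]
    rw [Finset.sum_congr rfl e1]
    rw [Finset.sum_range_succ, Nat.choose_self, Nat.cast_one, mul_one]
    congr 1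
    rw [Finset.range_eq_Ico, Finset.sum_eq_sum_Ico_succ_bot hp0]
    simp only [pow_zero, Nat.choose_zero_right, Nat.cast_one, one_mul]
    congr 1
    apply Finset.sum_congr rfl
    intro k _
    rw [mul_pow]; ring
  -- key valuation identity : v p = (v z)^(p-1)
  have hζz : (1 : K) + z * 1 = ζ := by rw [hzdef]; ring
  have hEq : (p : K) * z + (∑ k ∈ Finset.Ico 2 p, (p.choose k : K) * z ^ k) + z ^ p = 0 := by
    have h1 : (1 : K) + ∑ k ∈ Finset.Ico 1 p, (p.choose k : K) * z ^ k * 1 ^ k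
        + (z * 1) ^ p = 1 := by
      rw [← hexp 1, hζz, hζ.pow_eq_one]
    simp only [one_pow, mul_one] at h1
    rw [Finset.sum_eq_sum_Ico_succ_bot hp1] at h1
    simp only [pow_one, Nat.choose_one_right] at h1
    linear_combination h1
  set S : K := ∑ k ∈ Finset.Ico 2 p, (p.choose k : K) * z ^ k with hSdef
  have hvS : v S < v ((p : K) * z) := by
    apply v.map_sum_lt
    · rw [map_mul]; exact mul_ne_zero hvpne0 hvz0
    · intro k hk
      obtain ⟨hk2, hkp⟩ := Finset.mem_Ico.mp hk
      rw [map_mul, map_mul, map_pow]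
      calc v (p.choose k : K) * (v z) ^ k
          ≤ v (p : K) * (v z) ^ 2 := mul_le_mul' (hchoose k (by omega) hkp)
            (pow_le_pow_right_of_le_one' hvz1 hk2)
        _ < v (p : K) * v z := by
            apply mul_lt_mul_of_pos_left ?_ (zero_lt_iff.mpr hvpne0)
            rw [pow_two]
            exact mul_lt_of_lt_one_left hvzpos hvzlt
  have hzp_eq : z ^ p = -((p : K) * z) - S := by linear_combination hEq
  have hvzp : v (z ^ p) = v ((p : K) * z) := by
    rw [hzp_eq, v.map_sub_eq_of_lt_left (by rwa [v.map_neg] : v S < v (-((p : K) * z)))]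
    exact v.map_neg _
  have hvp : v (p : K) = (v z) ^ (p - 1) := by
    have h1 : (v z) ^ p = v (p : K) * v z := by
      rw [← map_pow, hvzp, map_mul]
    have h2 : (v z) ^ p = (v z) ^ (p - 1) * v z := by
      rw [← pow_succ]; congr 1; omega
    exact mul_right_cancel₀ hvz0 (h1.symm.trans h2)
  -- the coefficients of the Hensel polynomial
  set c : ℕ → K := fun i => if i = 0 then (1 - h) / z ^ p else (p.choose i : K) / z ^ (p - i)
    with hcdef
  have hvzppow : ∀ n : ℕ, (0 : Γ) < v (z ^ n) := by
    intro n; rw [map_pow]; exact zero_lt_iff.mpr (pow_ne_zero _ hvz0)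
  have hc0lt : v (c 0) < 1 := by
    simp only [hcdef, if_pos rfl]
    rw [map_div₀, div_lt_iff₀ (hvzppow p), one_mul, v.map_sub_swap]
    exact hcon
  have hcle : ∀ i, i < p → v (c i) ≤ 1 := by
    intro i hip
    rcases Nat.eq_zero_or_pos i with rfl | hi1
    · exact hc0lt.le
    · simp only [hcdef, if_neg (by omega : i ≠ 0)]
      rw [map_div₀, div_le_one₀ (hvzppow (p - i)), map_pow]
      calc v (p.choose i : K) ≤ v (p : K) := hchoose i (by omega) hip
        _ = (v z) ^ (p - 1) := hvp
        _ ≤ (v z) ^ (p - i) := pow_le_pow_right_of_le_one' hvz1 (by omega)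
  set cA : ℕ → A := fun i => if hip : i < p then ⟨c i, hcle i hip⟩ else 0 with hcAdef
  have hcAcoe : ∀ i, i < p → (algebraMap A K) (cA i) = c i := by
    intro i hip
    simp only [hcAdef, dif_pos hip]
    rfl
  -- the Hensel polynomial
  set g : Polynomial A := Polynomial.X ^ p
      + ∑ i ∈ Finset.range p, Polynomial.C (cA i) * Polynomial.X ^ i with hgdef
  have hgmonic : g.Monic := by
    apply Polynomial.monic_X_pow_add
    apply lt_of_le_of_lt (Polynomial.degree_sum_le _ _)
    rw [Finset.sup_lt_iff (by exact_mod_cast WithBot.bot_lt_coe p)]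
    intro i hi
    refine lt_of_le_of_lt (Polynomial.degree_C_mul_X_pow_le _ _) ?_
    exact_mod_cast Finset.mem_range.mp hi
  have hgeval : ∀ y : A, g.eval y = y ^ p + ∑ i ∈ Finset.range p, cA i * y ^ i := by
    intro y
    simp [hgdef, Polynomial.eval_finset_sum]
  have hev0 : g.eval 0 = cA 0 := by
    rw [hgeval 0, zero_pow hp.ne_zero, zero_add]
    rw [Finset.sum_eq_single_of_mem 0 (Finset.mem_range.mpr hp0)
      (fun i _ hi => by rw [zero_pow hi, mul_zero])]
    rw [pow_zero, mul_one]
  have h₁ : g.eval 0 ∈ IsLocalRing.maximalIdeal A := by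
    rw [hev0, IsLocalRing.mem_maximalIdeal, mem_nonunits_iff, hA.isUnit_iff_valuation_eq_one,
      hcAcoe 0 hp0]
    exact ne_of_lt hc0lt
  have hgcoeff1 : g.coeff 1 = cA 1 := by
    rw [hgdef]
    rw [Polynomial.coeff_add, Polynomial.coeff_X_pow, if_neg (by omega : 1 ≠ p)]
    rw [Polynomial.finset_sum_coeff]
    rw [Finset.sum_eq_single_of_mem 1 (Finset.mem_range.mpr hp1)
      (fun i _ hi => by
        rw [Polynomial.coeff_C_mul, Polynomial.coeff_X_pow, if_neg (Ne.symm hi), mul_zero])]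
    rw [Polynomial.coeff_C_mul, Polynomial.coeff_X_pow, if_pos rfl, mul_one, zero_add]
  have h₂ : IsUnit ((Polynomial.derivative g).eval 0) := by
    have hd : (Polynomial.derivative g).eval 0 = cA 1 := by
      rw [← Polynomial.coeff_zero_eq_eval_zero, Polynomial.coeff_derivative, hgcoeff1]
      simp
    rw [hd, hA.isUnit_iff_valuation_eq_one, hcAcoe 1 hp1]
    simp only [hcdef, if_neg one_ne_zero]
    rw [map_div₀, Nat.choose_one_right, map_pow, hvp]
    exact div_self (pow_ne_zero _ hvz0)
  obtain ⟨y, hy, -⟩ := HenselianLocalRing.is_henselian g hgmonic 0 h₁ h₂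
  set t : K := algebraMap A K y with htdef
  have hteval : t ^ p + ∑ i ∈ Finset.range p, c i * t ^ i = 0 := by
    have hy0 : g.eval y = 0 := hy
    have h1 := congrArg (algebraMap A K) hy0
    rw [hgeval y, map_zero, map_add, map_pow, map_sum] at h1
    rw [Finset.sum_congr rfl (fun i hi => by
      rw [map_mul, map_pow, hcAcoe i (Finset.mem_range.mp hi)])] at h1
    exact h1
  -- the root in K
  have hpoly : (1 + z * t) ^ p - h = z ^ p * (t ^ p + ∑ i ∈ Finset.range p, c i * t ^ i) := by
    rw [hexp t, mul_add, Finset.mul_sum]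
    rw [Finset.range_eq_Ico, Finset.sum_eq_sum_Ico_succ_bot hp0]
    have e0 : z ^ p * (c 0 * t ^ 0) = 1 - h := by
      simp only [hcdef, if_pos rfl, pow_zero, mul_one]
      field_simp
    have ek : ∀ k ∈ Finset.Ico 1 p, z ^ p * (c k * t ^ k)
        = (p.choose k : K) * z ^ k * t ^ k := by
      intro k hk
      obtain ⟨hk1, hk2⟩ := Finset.mem_Ico.mp hk
      simp only [hcdef, if_neg (by omega : k ≠ 0)]
      have hzz : z ^ p = z ^ (p - k) * z ^ k := by rw [← pow_add]; congr 1; omega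
      rw [hzz]
      field_simp
    rw [e0, Finset.sum_congr rfl ek, mul_pow]
    ring
  have hroot : (1 + z * t) ^ p = h := by
    have hzero : (1 + z * t) ^ p - h = 0 := by rw [hpoly, hteval, mul_zero]
    exact sub_eq_zero.mp hzero
  -- contradiction : β' generates a trivial extension
  set β : K := 1 + z * t with hβdef
  have hbot : β' ∈ (⊥ : IntermediateField K L) := by
    rw [IntermediateField.mem_bot]
    by_cases hβ : β = 0
    · refine ⟨0, ?_⟩
      rw [map_zero]
      have hhz : h = 0 := by rw [← hroot, hβ, zero_pow hp.ne_zero]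
      have h0 : β' ^ p = 0 := by rw [hβ'p, hhz, map_zero]
      exact ((pow_eq_zero_iff hp.ne_zero).mp h0).symm
    · have hβL : algebraMap K L β ≠ 0 := by
        simpa using hβ
      have hhL : algebraMap K L h ≠ 0 := by
        rw [← hroot, map_pow]
        exact pow_ne_zero _ hβL
      have hdiv : (β' / algebraMap K L β) ^ p = 1 := by
        rw [div_pow, hβ'p, ← map_pow, hroot, div_self hhL]
      have hζL : IsPrimitiveRoot (algebraMap K L ζ) p :=
        hζ.map_of_injective (algebraMap K L).injective
      obtain ⟨i, _, hi⟩ := hζL.eq_pow_of_pow_eq_one hdiv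
      refine ⟨ζ ^ i * β, ?_⟩
      rw [map_mul, map_pow, hi, div_mul_cancel₀ _ hβL]
  have hle : (⊤ : IntermediateField K L) ≤ ⊥ := by
    rw [← hβ'gen]
    exact IntermediateField.adjoin_le_iff.mpr (Set.singleton_subset_iff.mpr hbot)
  have hbt : (⊥ : IntermediateField K L) = ⊤ := le_antisymm le_top hle
  have hfb := IntermediateField.finrank_bot (F := K) (E := L)
  rw [hbt, IntermediateField.finrank_top'] at hfb
  rw [hdeg] at hfb
  omega
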